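/- arXiv:2405.04017 — 4 statements merged into one kernel-verified Lean document; each statement's English description precedes it below -/
import Mathlib

section
/- Let θ⁰ ∈ ℝⁿ and ρ > 0. Suppose θ̄ ∈ ℝⁿ satisfies ‖θ̄ − θ⁰‖ ≤ ρ and the variational inequality: for every θ′ with ‖θ′ − θ⁰‖ ≤ ρ, ∫ Δ̂(ω; θ̄) ⟨g(ω), θ′ − θ̄⟩ dμ(ω) ≥ 0. Assume moreover that for every v ∈ ℝⁿ with Σ v = 0 one has ⟨g′(ω), v⟩ = 0 for μ-almost every ω. Then for every θ with ‖θ − θ⁰‖ ≤ ρ there exists θ⋆ ∈ ℝⁿ such that: (i) ‖θ⋆ − θ⁰‖ ≤ 2ρ; (ii) θ − θ⋆ lies in the range of the linear map v ↦ Σ v; and (iii) θ⋆ satisfies the same variational inequality: for every θ′ with ‖θ′ − θ⁰‖ ≤ ρ, ∫ Δ̂(ω; θ⋆) ⟨g(ω), θ′ − θ⋆⟩ dμ(ω) ≥ 0. -/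
set_option maxHeartbeats 1000000


open MeasureTheory
open scoped RealInnerProductSpace

lemma memLp2_mul_integrable {Ω : Type*} [MeasurableSpace Ω] {μ : Measure Ω}
    {f h : Ω → ℝ} (hf : MemLp f 2 μ) (hh : MemLp h 2 μ) :
    Integrable (fun ω => f ω * h ω) μ := by
  have := L2.integrable_inner (𝕜 := ℝ) (hf.toLp f) (hh.toLp h)
  apply this.congr
  filter_upwards [hf.coeFn_toLp, hh.coeFn_toLp] with ω h1 h2
  simp [h1, h2, RCLike.inner_apply, mul_comm]

lemma memLp2_component {Ω : Type*} [MeasurableSpace Ω] {μ : Measure Ω} {n : ℕ}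
    {g : Ω → EuclideanSpace ℝ (Fin n)} (hg : MemLp g 2 μ) (i : Fin n) :
    MemLp (fun ω => g ω i) 2 μ := by
  have := (EuclideanSpace.proj (𝕜 := ℝ) i).comp_memLp' hg
  exact this

/-- Proposition 1 of the paper (abstract form): given a point `θ̄` satisfying the
variational inequality characterizing fixed points of the projected Bellman operator,
every `θ` in the ball admits a shifted stationary point `θ⋆` within radius `2ρ` such
that `θ − θ⋆` lies in the range of the feature covariance matrix and `θ⋆` satisfies
the same variational inequality. -/
theorem stmt0
    {Ω : Type*} [MeasurableSpace Ω] (μ : Measure Ω) [IsProbabilityMeasure μ]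
    (n : ℕ) (hn : 0 < n)
    (g g' : Ω → EuclideanSpace ℝ (Fin n))
    (q q' r : Ω → ℝ)
    (hg : MemLp g 2 μ) (hg' : MemLp g' 2 μ)
    (hq : MemLp q 2 μ) (hq' : MemLp q' 2 μ) (hr : MemLp r 2 μ)
    (γ : ℝ) (hγ0 : 0 ≤ γ) (hγ1 : γ < 1)
    (Δhat : Ω → EuclideanSpace ℝ (Fin n) → ℝ)
    (hΔ : ∀ ω θ, Δhat ω θ =
      (q ω + ⟪g ω, θ⟫) - r ω - γ * (q' ω + ⟪g' ω, θ⟫))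
    (M : Matrix (Fin n) (Fin n) ℝ)
    (hM : ∀ i j, M i j = ∫ ω, g ω i * g ω j ∂μ)
    (θ0 θbar : EuclideanSpace ℝ (Fin n)) (ρ : ℝ) (hρ : 0 < ρ)
    (hbar : ‖θbar - θ0‖ ≤ ρ)
    (hVI : ∀ θ' : EuclideanSpace ℝ (Fin n), ‖θ' - θ0‖ ≤ ρ →
      0 ≤ ∫ ω, Δhat ω θbar * ⟪g ω, θ' - θbar⟫ ∂μ)
    (hker : ∀ v : EuclideanSpace ℝ (Fin n), M.mulVec v = 0 →
      ∀ᵐ ω ∂μ, (⟪g' ω, v⟫ = 0)) :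
    ∀ θ : EuclideanSpace ℝ (Fin n), ‖θ - θ0‖ ≤ ρ →
      ∃ θstar : EuclideanSpace ℝ (Fin n),
        ‖θstar - θ0‖ ≤ 2 * ρ ∧
        (∃ w : EuclideanSpace ℝ (Fin n), M.mulVec w = θ - θstar) ∧
        (∀ θ' : EuclideanSpace ℝ (Fin n), ‖θ' - θ0‖ ≤ ρ →
          0 ≤ ∫ ω, Δhat ω θstar * ⟪g ω, θ' - θstar⟫ ∂μ) := by
  intro θ hθ
  -- the linear map associated with M, on Euclidean space
  set T : EuclideanSpace ℝ (Fin n) →ₗ[ℝ] EuclideanSpace ℝ (Fin n) :=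
    { toFun := fun v => WithLp.toLp 2 (M.mulVec v)
      map_add' := fun x y => by simp [Matrix.mulVec_add]
      map_smul' := fun c x => by simp [Matrix.mulVec_smul] } with hT
  have hTapp : ∀ x : EuclideanSpace ℝ (Fin n), ∀ i, T x i = ∑ j, M i j * x j := by
    intro x i
    simp [hT, Matrix.mulVec, dotProduct]
  -- symmetry of M
  have Msym : ∀ i j, M i j = M j i := by
    intro i j
    rw [hM, hM]
    exact integral_congr_ae (Filter.Eventually.of_forall fun ω => mul_comm _ _)
  have hinner : ∀ x y : EuclideanSpace ℝ (Fin n), ⟪x, y⟫ = ∑ i, x i * y i := by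
    intro x y
    simp [PiLp.inner_apply, RCLike.inner_apply, mul_comm]
  have hsym : ∀ x y : EuclideanSpace ℝ (Fin n), ⟪T x, y⟫ = ⟪x, T y⟫ := by
    intro x y
    rw [hinner, hinner]
    simp only [hTapp]
    calc ∑ i, (∑ j, M i j * x j) * y i
        = ∑ i, ∑ j, M i j * x j * y i := by simp [Finset.sum_mul]
      _ = ∑ j, ∑ i, M i j * x j * y i := Finset.sum_comm
      _ = ∑ j, x j * ∑ i, M j i * y i := by
            refine Finset.sum_congr rfl fun j _ => ?_
            rw [Finset.mul_sum]
            refine Finset.sum_congr rfl fun i _ => ?_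
            rw [Msym i j]; ring
  -- the kernel of T and its orthogonal complement
  set K : Submodule ℝ (EuclideanSpace ℝ (Fin n)) := LinearMap.ker T with hK
  have h1 : (LinearMap.range T)ᗮ = K := by
    ext x
    simp only [Submodule.mem_orthogonal, LinearMap.mem_range, hK, LinearMap.mem_ker]
    constructor
    · intro h
      have h2 := h (T (T x)) ⟨T x, rfl⟩
      rw [hsym] at h2
      exact inner_self_eq_zero.mp h2
    · rintro h u ⟨z, rfl⟩
      rw [hsym, h, inner_zero_right]
  have horth : Kᗮ = LinearMap.range T := by
    rw [← h1, Submodule.orthogonal_orthogonal]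
  -- define the shift and θstar
  set v : EuclideanSpace ℝ (Fin n) := (K.orthogonalProjectionOnto (θ - θbar) : EuclideanSpace ℝ (Fin n)) with hv
  set θstar : EuclideanSpace ℝ (Fin n) := θbar + v with hθstar
  have hvK : v ∈ K := SetLike.coe_mem _
  have hTv : T v = 0 := hvK
  have hMv : M.mulVec v = 0 := by
    funext i
    have := congrArg (fun z : EuclideanSpace ℝ (Fin n) => z i) hTv
    simpa [hTapp, Matrix.mulVec, dotProduct] using this
  -- range condition
  have hrange : θ - θstar ∈ LinearMap.range T := by
    rw [← horth]
    have : θ - θstar = (θ - θbar) - K.orthogonalProjectionOnto (θ - θbar) := by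
      rw [hθstar, hv]; abel
    rw [this]
    exact K.sub_starProjection_mem_orthogonal _
  obtain ⟨w, hw⟩ := hrange
  -- norm bound
  have hnorm : ‖θstar - θ0‖ ≤ 2 * ρ := by
    set x : EuclideanSpace ℝ (Fin n) :=
      (θbar - θ0) - K.orthogonalProjectionOnto (θbar - θ0) with hx
    set y : EuclideanSpace ℝ (Fin n) :=
      (K.orthogonalProjectionOnto (θ - θ0) : EuclideanSpace ℝ (Fin n)) with hy
    have hdecomp : θstar - θ0 = x + y := by
      have h3 : (θ - θbar) = (θ - θ0) - (θbar - θ0) := by abel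
      rw [hθstar, hv, h3, map_sub, hx, hy]
      push_cast
      abel
    have hxK : x ∈ Kᗮ := K.sub_starProjection_mem_orthogonal _
    have hyK : y ∈ K := SetLike.coe_mem _
    have hxy : ⟪x, y⟫ = 0 := by
      rw [real_inner_comm]
      exact (Submodule.mem_orthogonal K x).mp hxK y hyK
    have hxa : ‖x‖ ≤ ‖θbar - θ0‖ := by
      have hpa : ⟪(K.orthogonalProjectionOnto (θbar - θ0) : EuclideanSpace ℝ (Fin n)), x⟫ = 0 :=
        (Submodule.mem_orthogonal K x).mp hxK _ (SetLike.coe_mem _)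
      have hsum : θbar - θ0 = (K.orthogonalProjectionOnto (θbar - θ0) : EuclideanSpace ℝ (Fin n)) + x := by
        rw [hx]; abel
      have hp := norm_add_sq_real (K.orthogonalProjectionOnto (θbar - θ0) : EuclideanSpace ℝ (Fin n)) x
      rw [← hsum, hpa] at hp
      nlinarith [norm_nonneg (θbar - θ0), norm_nonneg x,
        sq_nonneg (‖(K.orthogonalProjectionOnto (θbar - θ0) : EuclideanSpace ℝ (Fin n))‖)]
    have hyb : ‖y‖ ≤ ‖θ - θ0‖ := by
      have hbx : (θ - θ0) - y ∈ Kᗮ := K.sub_starProjection_mem_orthogonal _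
      have hpb : ⟪(θ - θ0) - y, y⟫ = 0 := by
        rw [real_inner_comm]
        exact (Submodule.mem_orthogonal K _).mp hbx y hyK
      have hsum : θ - θ0 = ((θ - θ0) - y) + y := by abel
      have hp := norm_add_sq_real ((θ - θ0) - y) y
      rw [← hsum, hpb] at hp
      nlinarith [norm_nonneg (θ - θ0), norm_nonneg y, sq_nonneg (‖(θ - θ0) - y‖)]
    have hpyth : ‖θstar - θ0‖ ^ 2 = ‖x‖ ^ 2 + ‖y‖ ^ 2 := by
      rw [hdecomp, norm_add_sq_real, hxy]; ring
    nlinarith [norm_nonneg (θstar - θ0), norm_nonneg x, norm_nonneg y,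
      norm_nonneg (θbar - θ0), norm_nonneg (θ - θ0), hρ.le]
  -- a.e. vanishing of ⟪g ω, v⟫
  have hgi : ∀ i, MemLp (fun ω => g ω i) 2 μ := fun i => memLp2_component hg i
  have hij : ∀ i j : Fin n, Integrable (fun ω => g ω i * g ω j) μ :=
    fun i j => memLp2_mul_integrable (hgi i) (hgi j)
  have hgv : ∀ᵐ ω ∂μ, ⟪g ω, v⟫ = 0 := by
    have hf2 : MemLp (fun ω => ⟪g ω, v⟫) 2 μ := hg.inner_const v
    have hfint : Integrable (fun ω => ⟪g ω, v⟫ ^ 2) μ := hf2.integrable_sq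
    have hzero : ∫ ω, ⟪g ω, v⟫ ^ 2 ∂μ = 0 := by
      have hexp : ∀ ω, ⟪g ω, v⟫ ^ 2 = ∑ i, ∑ j, (v i * v j) * (g ω i * g ω j) := by
        intro ω
        rw [hinner, sq, Finset.sum_mul_sum]
        refine Finset.sum_congr rfl fun i _ => Finset.sum_congr rfl fun j _ => by ring
      calc ∫ ω, ⟪g ω, v⟫ ^ 2 ∂μ
          = ∫ ω, ∑ i, ∑ j, (v i * v j) * (g ω i * g ω j) ∂μ := by
            exact integral_congr_ae (Filter.Eventually.of_forall fun ω => hexp ω)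
        _ = ∑ i, ∑ j, (v i * v j) * M i j := by
            rw [integral_finset_sum _
              (fun i _ => integrable_finset_sum _ (fun j _ => ((hij i j).const_mul _)))]
            refine Finset.sum_congr rfl fun i _ => ?_
            rw [integral_finset_sum _ (fun j _ => ((hij i j).const_mul _))]
            refine Finset.sum_congr rfl fun j _ => ?_
            rw [integral_const_mul, hM]
        _ = ⟪v, T v⟫ := by
            rw [hinner]
            simp only [hTapp]
            refine Finset.sum_congr rfl fun i _ => ?_
            rw [Finset.mul_sum]
            refine Finset.sum_congr rfl fun j _ => by ring
        _ = 0 := by rw [hTv, inner_zero_right]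
    have := (integral_eq_zero_iff_of_nonneg (fun ω => sq_nonneg _) hfint).mp hzero
    filter_upwards [this] with ω h
    exact pow_eq_zero_iff two_ne_zero |>.mp (by simpa using h)
  have hg'v : ∀ᵐ ω ∂μ, ⟪g' ω, v⟫ = 0 := hker v hMv
  refine ⟨θstar, hnorm, ⟨w, congrArg WithLp.ofLp hw⟩, ?_⟩
  intro θ' hθ'
  have key : ∫ ω, Δhat ω θstar * ⟪g ω, θ' - θstar⟫ ∂μ
      = ∫ ω, Δhat ω θbar * ⟪g ω, θ' - θbar⟫ ∂μ := by
    refine integral_congr_ae ?_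
    filter_upwards [hgv, hg'v] with ω h1 h2
    have e1 : Δhat ω θstar = Δhat ω θbar := by
      rw [hΔ, hΔ, hθstar, inner_add_right, inner_add_right, h1, h2]
      ring
    have e2 : ⟪g ω, θ' - θstar⟫ = ⟪g ω, θ' - θbar⟫ := by
      have : θ' - θstar = (θ' - θbar) - v := by rw [hθstar]; abel
      rw [this, inner_sub_right, h1, sub_zero]
    rw [e1, e2]
  rw [key]
  exact hVI θ' hθ'
end

section
/- Let A be a finite nonempty set, let h : Ω → A → ℝⁿ and c : Ω → A → ℝ be measurable with ∫ max_{a∈A} ‖h(ω)(a)‖² dμ < ∞ and ∫ max_{a∈A} c(ω)(a)² dμ < ∞. Let γ, ν ∈ (0,1), let λ₀ > 0 be such that every nonzero eigenvalue of Σ is at least λ₀, and let θ₁, θ₂ ∈ ℝⁿ with Δ := θ₁ − θ₂ in the range of the linear map v ↦ Σ v. Assume the contraction hypothesis ∫ (max_{a∈A} |⟨h(ω)(a), Δ⟩|)² dμ(ω) ≤ ((1 − ν)/γ)² Δᵀ Σ Δ. Define X(ω) = ⟨g(ω), Δ⟩ and W(ω) = max_{a∈A} (c(ω)(a) + ⟨h(ω)(a),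 θ₁⟩) − max_{a∈A} (c(ω)(a) + ⟨h(ω)(a), θ₂⟩). Then ∫ X² dμ − γ ∫ X W dμ ≥ ν λ₀ ‖Δ‖². -/
open MeasureTheory Matrix
open scoped RealInnerProductSpace

lemma aux_sup'_sub {A : Type*} [Fintype A] [Nonempty A] (f q : A → ℝ) :
    Finset.univ.sup' Finset.univ_nonempty f - Finset.univ.sup' Finset.univ_nonempty q
      ≤ Finset.univ.sup' Finset.univ_nonempty (fun a => |f a - q a|) := by
  rw [sub_le_iff_le_add]
  apply Finset.sup'_le
  intro a _
  have h1 : f a - q a ≤ Finset.univ.sup' Finset.univ_nonempty (fun a => |f a - q a|) :=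
    le_trans (le_abs_self _) (Finset.le_sup' (fun a => |f a - q a|) (Finset.mem_univ a))
  have h2 : q a ≤ Finset.univ.sup' Finset.univ_nonempty q := Finset.le_sup' _ (Finset.mem_univ a)
  linarith

lemma aux_int_mul {Ω : Type*} [MeasurableSpace Ω] {μ : Measure Ω}
    {f q : Ω → ℝ} (hf : MemLp f 2 μ) (hq : MemLp q 2 μ) :
    Integrable (fun ω => f ω * q ω) μ := by
  refine Integrable.mono' ((hf.integrable_sq.add hq.integrable_sq).const_mul (1/2 : ℝ))
    (hf.aestronglyMeasurable.mul hq.aestronglyMeasurable) ?_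
  filter_upwards with ω
  rw [Real.norm_eq_abs, abs_mul]
  simp only [Pi.add_apply]
  nlinarith [sq_nonneg (|f ω| - |q ω|), sq_abs (f ω), sq_abs (q ω), abs_nonneg (f ω),
    abs_nonneg (q ω)]


lemma aux_absmul (x y : ℝ) : |x * y| ≤ 1/2 * (x ^ 2 + y ^ 2) := by
  rw [abs_mul]
  nlinarith [sq_nonneg (|x| - |y|), sq_abs x, sq_abs y, abs_nonneg x, abs_nonneg y]

lemma aux_amgm (γ ν x w : ℝ) (hγ0 : 0 < γ) (h1ν : 0 < 1 - ν) :
    γ * (x * w) ≤ (1 - ν) / 2 * x ^ 2 + γ ^ 2 / (2 * (1 - ν)) * w ^ 2 := by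
  have hq : γ ^ 2 = γ ^ 2 / (2 * (1 - ν)) * (2 * (1 - ν)) := by field_simp
  nlinarith [sq_nonneg ((1 - ν) * x - γ * w), h1ν, mul_pos two_pos h1ν]

lemma aux_inner_dot {n : ℕ} (x y : EuclideanSpace ℝ (Fin n)) :
    ⟪x, y⟫ = (fun i => x i) ⬝ᵥ (fun i => y i) := by
  simp [PiLp.inner_apply, RCLike.inner_apply, dotProduct, mul_comm]

lemma aux_dotsymm {n : ℕ} {M : Matrix (Fin n) (Fin n) ℝ} (hs : M.IsSymm)
    (x y : Fin n → ℝ) : (M.mulVec x) ⬝ᵥ y = x ⬝ᵥ (M.mulVec y) := by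
  rw [Matrix.dotProduct_mulVec, ← Matrix.mulVec_transpose, hs.eq, dotProduct_comm,
    Matrix.dotProduct_mulVec, ← Matrix.mulVec_transpose, hs.eq, dotProduct_comm]

lemma aux_spectral {n : ℕ} (M : Matrix (Fin n) (Fin n) ℝ) (hs : M.IsSymm) (lam0 : ℝ)
    (heig : ∀ (e : ℝ) (v : Fin n → ℝ), v ≠ 0 → M.mulVec v = e • v → e ≠ 0 → lam0 ≤ e)
    (Δ w : EuclideanSpace ℝ (Fin n)) (hw : M.mulVec w = Δ) :
    lam0 * ‖Δ‖ ^ 2 ≤ Δ ⬝ᵥ M.mulVec Δ := by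
  have hherm : M.IsHermitian := by
    rw [Matrix.IsHermitian, Matrix.conjTranspose]; ext i j; simpa using congrFun (congrFun hs.eq i) j
  set b := hherm.eigenvectorBasis with hb
  set e := hherm.eigenvalues with he
  have hbe : ∀ i, M.mulVec (fun j => b i j) = e i • (fun j => b i j) := by
    intro i; exact hherm.mulVec_eigenvectorBasis i
  have hd : ∀ i, ⟪Δ, b i⟫ = e i * ((fun j => w j) ⬝ᵥ (fun j => b i j)) := by
    intro i
    rw [aux_inner_dot]
    have : (fun j => Δ j) = M.mulVec (fun j => w j) := by
      rw [show (fun j => w j) = (w : Fin n → ℝ) from rfl]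
      exact hw.symm
    rw [this, aux_dotsymm hs, hbe i, dotProduct_smul, smul_eq_mul]
  have hnorm : ‖Δ‖ ^ 2 = ∑ i, ⟪Δ, b i⟫ ^ 2 := by
    rw [← real_inner_self_eq_norm_sq, ← b.sum_inner_mul_inner Δ Δ]
    refine Finset.sum_congr rfl fun i _ => ?_
    rw [sq, real_inner_comm Δ (b i)]
  have hS : Δ ⬝ᵥ M.mulVec Δ = ∑ i, e i * ⟪Δ, b i⟫ ^ 2 := by
    have h1 : Δ ⬝ᵥ M.mulVec Δ = ⟪Δ, (WithLp.toLp 2 (M.mulVec Δ))⟫ := by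
      rw [aux_inner_dot]
    rw [h1, ← b.sum_inner_mul_inner Δ (WithLp.toLp 2 (M.mulVec Δ))]
    refine Finset.sum_congr rfl fun i _ => ?_
    have h2 : ⟪b i, (WithLp.toLp 2 (M.mulVec Δ))⟫ = e i * ⟪b i, Δ⟫ := by
      rw [aux_inner_dot, aux_inner_dot, ← aux_dotsymm hs, hbe i, smul_dotProduct,
        smul_eq_mul]
    rw [h2, sq, real_inner_comm Δ (b i)]
    ring
  rw [hS, hnorm, Finset.mul_sum]
  refine Finset.sum_le_sum fun i _ => ?_
  by_cases hdi : ⟪Δ, b i⟫ = 0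
  · simp [hdi]
  · have hei : e i ≠ 0 := by
      intro h0
      apply hdi
      rw [hd i, h0, zero_mul]
    have hbne : (fun j => b i j) ≠ (0 : Fin n → ℝ) := by
      intro h0
      exact b.orthonormal.ne_zero i (by ext j; exact congrFun h0 j)
    have := heig (e i) (fun j => b i j) hbne (hbe i) hei
    exact mul_le_mul_of_nonneg_right this (sq_nonneg _)

lemma aux_int_sq {Ω : Type*} [MeasurableSpace Ω] {μ : Measure Ω} {n : ℕ}
    (g : Ω → EuclideanSpace ℝ (Fin n)) (hg : MemLp g 2 μ)
    (M : Matrix (Fin n) (Fin n) ℝ)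
    (hM : ∀ i j, M i j = ∫ ω, g ω i * g ω j ∂μ)
    (Δ : EuclideanSpace ℝ (Fin n)) :
    ∫ ω, ⟪g ω, Δ⟫ ^ 2 ∂μ = Δ ⬝ᵥ M.mulVec Δ := by
  have hgi : ∀ i, MemLp (fun ω => g ω i) 2 μ := by
    intro i
    have := hg.inner_const (𝕜 := ℝ) (EuclideanSpace.single i (1 : ℝ))
    simpa [EuclideanSpace.inner_single_right] using this
  have hgij : ∀ i j, Integrable (fun ω => g ω i * g ω j) μ := fun i j =>
    aux_int_mul (hgi i) (hgi j)
  have hpt : ∀ ω, ⟪g ω, Δ⟫ ^ 2 = ∑ i, ∑ j, Δ i * Δ j * (g ω i * g ω j) := by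
    intro ω
    rw [PiLp.inner_apply]
    simp only [RCLike.inner_apply, conj_trivial]
    rw [sq, Finset.sum_mul_sum]
    exact Finset.sum_congr rfl fun i _ => Finset.sum_congr rfl fun j _ => by ring
  calc ∫ ω, ⟪g ω, Δ⟫ ^ 2 ∂μ
      = ∫ ω, ∑ i, ∑ j, Δ i * Δ j * (g ω i * g ω j) ∂μ := by
        exact integral_congr_ae (Filter.Eventually.of_forall hpt)
    _ = ∑ i, ∑ j, Δ i * Δ j * ∫ ω, g ω i * g ω j ∂μ := by
        rw [integral_finset_sum _ (fun i _ => integrable_finset_sum _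
          (fun j _ => ((hgij i j).const_mul _)))]
        refine Finset.sum_congr rfl fun i _ => ?_
        rw [integral_finset_sum _ (fun j _ => ((hgij i j).const_mul _))]
        exact Finset.sum_congr rfl fun j _ => integral_const_mul _ _
    _ = Δ ⬝ᵥ M.mulVec Δ := by
        simp only [dotProduct, Matrix.mulVec, Finset.mul_sum]
        refine Finset.sum_congr rfl fun i _ => Finset.sum_congr rfl fun j _ => ?_
        rw [← hM i j]
        ring

/-- Abstract form of Lemma D.1 of the paper for neural Q-learning: the descent bound for
the max-Q difference term under the contraction (regularity) hypothesis. -/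
theorem stmt8
    {Ω : Type*} [MeasurableSpace Ω] (μ : Measure Ω) [IsProbabilityMeasure μ]
    (n : ℕ) (hn : 0 < n)
    (g : Ω → EuclideanSpace ℝ (Fin n)) (hg : MemLp g 2 μ)
    (M : Matrix (Fin n) (Fin n) ℝ)
    (hM : ∀ i j, M i j = ∫ ω, g ω i * g ω j ∂μ)
    (A : Type*) [Fintype A] [Nonempty A]
    (h : Ω → A → EuclideanSpace ℝ (Fin n)) (c : Ω → A → ℝ)
    (hhmeas : ∀ a, Measurable (fun ω => h ω a))
    (hcmeas : ∀ a, Measurable (fun ω => c ω a))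
    (hhint : Integrable (fun ω =>
      Finset.univ.sup' Finset.univ_nonempty (fun a : A => ‖h ω a‖ ^ 2)) μ)
    (hcint : Integrable (fun ω =>
      Finset.univ.sup' Finset.univ_nonempty (fun a : A => c ω a ^ 2)) μ)
    (γ ν : ℝ) (hγ0 : 0 < γ) (hγ1 : γ < 1) (hν0 : 0 < ν) (hν1 : ν < 1)
    (lam0 : ℝ) (hlam0 : 0 < lam0)
    (heig : ∀ (e : ℝ) (v : Fin n → ℝ), v ≠ 0 → M.mulVec v = e • v → e ≠ 0 → lam0 ≤ e)
    (θ1 θ2 : EuclideanSpace ℝ (Fin n))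
    (hrange : ∃ w : EuclideanSpace ℝ (Fin n), M.mulVec w = θ1 - θ2)
    (hcontr : ∫ ω, (Finset.univ.sup' Finset.univ_nonempty
        (fun a : A => |⟪h ω a, θ1 - θ2⟫|)) ^ 2 ∂μ
      ≤ ((1 - ν) / γ) ^ 2 * ((θ1 - θ2) ⬝ᵥ M.mulVec (θ1 - θ2))) :
    ν * lam0 * ‖θ1 - θ2‖ ^ 2 ≤
      ∫ ω, ⟪g ω, θ1 - θ2⟫ ^ 2 ∂μ
        - γ * ∫ ω, ⟪g ω, θ1 - θ2⟫ *
            ((Finset.univ.sup' Finset.univ_nonempty (fun a : A => c ω a + ⟪h ω a, θ1⟫))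
              - Finset.univ.sup' Finset.univ_nonempty (fun a : A => c ω a + ⟪h ω a, θ2⟫)) ∂μ := by
  obtain ⟨w, hw⟩ := hrange
  set Δ : EuclideanSpace ℝ (Fin n) := θ1 - θ2 with hΔdef
  set X : Ω → ℝ := fun ω => ⟪g ω, Δ⟫ with hXdef
  set H : Ω → ℝ := fun ω =>
    Finset.univ.sup' Finset.univ_nonempty (fun a : A => |⟪h ω a, Δ⟫|) with hHdef
  set W : Ω → ℝ := fun ω =>
    (Finset.univ.sup' Finset.univ_nonempty (fun a : A => c ω a + ⟪h ω a, θ1⟫))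
      - Finset.univ.sup' Finset.univ_nonempty (fun a : A => c ω a + ⟪h ω a, θ2⟫) with hWdef
  set S : ℝ := Δ ⬝ᵥ M.mulVec Δ with hSdef
  have h1ν : 0 < 1 - ν := by linarith
  -- basic L² facts about X
  have hX2 : MemLp X 2 μ := hg.inner_const (𝕜 := ℝ) Δ
  have hXsq : Integrable (fun ω => X ω ^ 2) μ := hX2.integrable_sq
  -- measurability of H and W
  have hHmeas : Measurable H := by
    have h1 : Measurable (Finset.univ.sup' Finset.univ_nonempty
        (fun (a : A) (ω : Ω) => |⟪h ω a, Δ⟫|)) :=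
      Finset.measurable_sup' _ (fun a _ => ((hhmeas a).inner measurable_const).abs)
    have h2 : H = Finset.univ.sup' Finset.univ_nonempty
        (fun (a : A) (ω : Ω) => |⟪h ω a, Δ⟫|) := by
      funext ω
      rw [Finset.sup'_apply]
    rw [h2]
    exact h1
  have hWmeas : Measurable W := by
    apply Measurable.sub
    · have h1 : Measurable (Finset.univ.sup' Finset.univ_nonempty
          (fun (a : A) (ω : Ω) => c ω a + ⟪h ω a, θ1⟫)) :=
        Finset.measurable_sup' _
          (fun a _ => (hcmeas a).add ((hhmeas a).inner measurable_const))
      have h2 : (fun ω => Finset.univ.sup' Finset.univ_nonempty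
          (fun a : A => c ω a + ⟪h ω a, θ1⟫)) = Finset.univ.sup' Finset.univ_nonempty
          (fun (a : A) (ω : Ω) => c ω a + ⟪h ω a, θ1⟫) := by
        funext ω
        rw [Finset.sup'_apply]
      rw [h2]
      exact h1
    · have h1 : Measurable (Finset.univ.sup' Finset.univ_nonempty
          (fun (a : A) (ω : Ω) => c ω a + ⟪h ω a, θ2⟫)) :=
        Finset.measurable_sup' _
          (fun a _ => (hcmeas a).add ((hhmeas a).inner measurable_const))
      have h2 : (fun ω => Finset.univ.sup' Finset.univ_nonempty
          (fun a : A => c ω a + ⟪h ω a, θ2⟫)) = Finset.univ.sup' Finset.univ_nonempty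
          (fun (a : A) (ω : Ω) => c ω a + ⟪h ω a, θ2⟫) := by
        funext ω
        rw [Finset.sup'_apply]
      rw [h2]
      exact h1
  -- H squared is integrable
  have hHsq : Integrable (fun ω => H ω ^ 2) μ := by
    refine Integrable.mono' (hhint.mul_const (‖Δ‖ ^ 2))
      ((hHmeas.pow_const 2).aestronglyMeasurable) ?_
    filter_upwards with ω
    rw [Real.norm_eq_abs, abs_of_nonneg (sq_nonneg _)]
    obtain ⟨a, _, ha⟩ := Finset.exists_mem_eq_sup' Finset.univ_nonempty
      (fun a : A => |⟪h ω a, Δ⟫|)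
    have hHa : H ω = |⟪h ω a, Δ⟫| := ha
    rw [hHa, sq_abs]
    have h1 : ⟪h ω a, Δ⟫ ^ 2 ≤ ‖h ω a‖ ^ 2 * ‖Δ‖ ^ 2 := by
      have := abs_real_inner_le_norm (h ω a) Δ
      nlinarith [abs_nonneg ⟪h ω a, Δ⟫, sq_abs ⟪h ω a, Δ⟫, norm_nonneg (h ω a), norm_nonneg Δ]
    refine le_trans h1 (mul_le_mul_of_nonneg_right ?_ (sq_nonneg _))
    exact Finset.le_sup' (fun a : A => ‖h ω a‖ ^ 2) (Finset.mem_univ a)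
  -- |W| ≤ H
  have hWH : ∀ ω, |W ω| ≤ H ω := by
    intro ω
    have hdiff : ∀ a : A, |(c ω a + ⟪h ω a, θ1⟫) - (c ω a + ⟪h ω a, θ2⟫)| = |⟪h ω a, Δ⟫| := by
      intro a
      congr 1
      rw [hΔdef, inner_sub_right]
      ring
    rw [abs_le]
    constructor
    · have := aux_sup'_sub (fun a : A => c ω a + ⟪h ω a, θ2⟫) (fun a : A => c ω a + ⟪h ω a, θ1⟫)
      simp only [show ∀ a : A, |(c ω a + ⟪h ω a, θ2⟫) - (c ω a + ⟪h ω a, θ1⟫)|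
          = |⟪h ω a, Δ⟫| from fun a => by
        rw [abs_sub_comm]; exact hdiff a] at this
      simp only [hWdef, hHdef]
      linarith
    · have := aux_sup'_sub (fun a : A => c ω a + ⟪h ω a, θ1⟫) (fun a : A => c ω a + ⟪h ω a, θ2⟫)
      simp only [hdiff] at this
      simp only [hWdef, hHdef]
      linarith
  have hH0 : ∀ ω, 0 ≤ H ω := fun ω => le_trans (abs_nonneg _) (hWH ω)
  have hWsqH : ∀ ω, W ω ^ 2 ≤ H ω ^ 2 := by
    intro ω
    have := hWH ω
    nlinarith [abs_nonneg (W ω), sq_abs (W ω)]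
  -- W squared integrable
  have hWsq : Integrable (fun ω => W ω ^ 2) μ := by
    refine Integrable.mono' hHsq ((hWmeas.pow_const 2).aestronglyMeasurable) ?_
    filter_upwards with ω
    rw [Real.norm_eq_abs, abs_of_nonneg (sq_nonneg _)]
    exact hWsqH ω
  -- XW integrable
  have hXW : Integrable (fun ω => X ω * W ω) μ := by
    refine Integrable.mono' ((hXsq.add hWsq).const_mul (1/2 : ℝ))
      (hX2.aestronglyMeasurable.mul hWmeas.aestronglyMeasurable) ?_
    filter_upwards with ω
    rw [Real.norm_eq_abs]
    simp only [Pi.add_apply]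
    exact aux_absmul (X ω) (W ω)
  -- ∫ X² = S
  have hIX2 : ∫ ω, X ω ^ 2 ∂μ = S := aux_int_sq g hg M hM Δ
  have hS0 : 0 ≤ S := hIX2 ▸ integral_nonneg (fun ω => sq_nonneg _)
  -- ∫ W² ≤ ((1-ν)/γ)² S
  have hIW2 : ∫ ω, W ω ^ 2 ∂μ ≤ ((1 - ν) / γ) ^ 2 * S := by
    refine le_trans ?_ hcontr
    exact integral_mono_of_nonneg (Filter.Eventually.of_forall fun ω => sq_nonneg _)
      hHsq (Filter.Eventually.of_forall hWsqH)
  -- AM-GM bound on the cross term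
  have hcross : γ * ∫ ω, X ω * W ω ∂μ
      ≤ (1 - ν) / 2 * ∫ ω, X ω ^ 2 ∂μ + γ ^ 2 / (2 * (1 - ν)) * ∫ ω, W ω ^ 2 ∂μ := by
    rw [← integral_const_mul, ← integral_const_mul, ← integral_const_mul, ← integral_add
      (hXsq.const_mul _) (hWsq.const_mul _)]
    refine integral_mono (hXW.const_mul γ) ((hXsq.const_mul _).add (hWsq.const_mul _)) ?_
    intro ω
    exact aux_amgm γ ν (X ω) (W ω) hγ0 h1ν
  -- combine
  have hc2 : γ ^ 2 / (2 * (1 - ν)) * ∫ ω, W ω ^ 2 ∂μ ≤ (1 - ν) / 2 * S := by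
    have hpos : 0 ≤ γ ^ 2 / (2 * (1 - ν)) := by positivity
    refine le_trans (mul_le_mul_of_nonneg_left hIW2 hpos) (le_of_eq ?_)
    field_simp
  have hSlam : lam0 * ‖Δ‖ ^ 2 ≤ S := by
    have hsymm : M.IsSymm := by
      ext i j
      rw [Matrix.transpose_apply, hM i j, hM j i]
      simp_rw [mul_comm]
    exact aux_spectral M hsymm lam0 heig Δ w hw
  have hγK : γ * ∫ ω, X ω * W ω ∂μ ≤ (1 - ν) * S := by
    have e1 : (1 - ν) / 2 * ∫ ω, X ω ^ 2 ∂μ = (1 - ν) / 2 * S := by rw [hIX2]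
    linarith
  have hfinal : ν * S ≤ ∫ ω, X ω ^ 2 ∂μ - γ * ∫ ω, X ω * W ω ∂μ := by
    rw [hIX2]
    linarith
  calc ν * lam0 * ‖Δ‖ ^ 2 ≤ ν * S := by
        have := mul_le_mul_of_nonneg_left hSlam (le_of_lt hν0)
        linarith [this]
    _ ≤ _ := hfinal
end

section
/- Let κ be a Markov kernel on a measurable space X and let μ be a probability measure on X that is invariant under κ (i.e., the measure obtained by first sampling x ∼ μ and then y ∼ κ(x) has law μ). Let γ ∈ [0,1), let r : X → ℝ be measurable, and for square-integrable measurable f : X → ℝ define (T f)(x) = r(x) + γ ∫ f(y) dκ(x)(y). Then for all square-integrable measurable f, h : X → ℝ with f − h square-integrable, ∫ (T f(x) − T h(x))² dμ(x) ≤ γ² ∫ (f(x) − h(x))² dμ(x). -/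
open MeasureTheory ProbabilityTheory

private lemma lint_bind_eq {X : Type*} [MeasurableSpace X]
    (κ : Kernel X X) (μ : Measure X)
    (hinv : μ.bind (fun x => κ x) = μ)
    (q : X → ℝ) (hq : Measurable q) :
    ∫⁻ x, ∫⁻ y, ENNReal.ofReal (q y ^ 2) ∂(κ x) ∂μ
      = ∫⁻ y, ENNReal.ofReal (q y ^ 2) ∂μ := by
  rw [← Measure.lintegral_bind κ.measurable.aemeasurable
    ((hq.pow_const 2).ennreal_ofReal).aemeasurable, hinv]

private lemma ae_memℒp_kernel {X : Type*} [MeasurableSpace X]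
    (κ : Kernel X X) [IsMarkovKernel κ]
    (μ : Measure X) [IsProbabilityMeasure μ]
    (hinv : μ.bind (fun x => κ x) = μ)
    (q : X → ℝ) (hq : Measurable q) (hq2 : MemLp q 2 μ) :
    ∀ᵐ x ∂μ, MemLp q 2 (κ x) := by
  have hm : Measurable fun y => ENNReal.ofReal (q y ^ 2) :=
    (hq.pow_const 2).ennreal_ofReal
  have hfin : ∫⁻ x, ∫⁻ y, ENNReal.ofReal (q y ^ 2) ∂(κ x) ∂μ < ⊤ := by
    rw [lint_bind_eq κ μ hinv q hq]
    have := hq2.integrable_sq.hasFiniteIntegral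
    rw [hasFiniteIntegral_iff_ofReal (Filter.Eventually.of_forall fun x => sq_nonneg _)] at this
    exact this
  filter_upwards [ae_lt_top hm.lintegral_kernel hfin.ne] with x hx
  rw [memLp_two_iff_integrable_sq hq.aestronglyMeasurable]
  refine ⟨(hq.pow_const 2).aestronglyMeasurable, ?_⟩
  rw [hasFiniteIntegral_iff_ofReal (Filter.Eventually.of_forall fun y => sq_nonneg _)]
  exact hx

/-- γ-contraction of the Bellman operator in the L²(μ) norm under the stationary
distribution (eq. (contraction) inside Lemma 2 of the paper). -/
theorem stmt9
    {X : Type*} [MeasurableSpace X]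
    (κ : Kernel X X) [IsMarkovKernel κ]
    (μ : Measure X) [IsProbabilityMeasure μ]
    (hinv : μ.bind (fun x => κ x) = μ)
    (γ : ℝ) (hγ0 : 0 ≤ γ) (hγ1 : γ < 1)
    (r : X → ℝ) (hr : Measurable r) :
    ∀ f h : X → ℝ, Measurable f → Measurable h →
      MemLp f 2 μ → MemLp h 2 μ → MemLp (f - h) 2 μ →
      ∫ x, ((r x + γ * ∫ y, f y ∂(κ x)) - (r x + γ * ∫ y, h y ∂(κ x))) ^ 2 ∂μ
        ≤ γ ^ 2 * ∫ x, (f x - h x) ^ 2 ∂μ := by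
  intro f h hf hh hf2 hh2 hfh2
  set g : X → ℝ := f - h with hgdef
  have hg : Measurable g := hf.sub hh
  have hm : Measurable fun y => ENNReal.ofReal (g y ^ 2) :=
    (hg.pow_const 2).ennreal_ofReal
  set F : X → ENNReal := fun x => ∫⁻ y, ENNReal.ofReal (g y ^ 2) ∂(κ x) with hF
  have hFmeas : Measurable F := hm.lintegral_kernel
  have hFint : ∫⁻ x, F x ∂μ = ∫⁻ y, ENNReal.ofReal (g y ^ 2) ∂μ :=
    lint_bind_eq κ μ hinv g hg
  have hgsq : Integrable (fun y => g y ^ 2) μ := by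
    have := hfh2.integrable_sq
    simpa [hgdef] using this
  have hfin2 : ∫⁻ y, ENNReal.ofReal (g y ^ 2) ∂μ < ⊤ := by
    have := hgsq.hasFiniteIntegral
    rwa [hasFiniteIntegral_iff_ofReal (Filter.Eventually.of_forall fun x => sq_nonneg _)] at this
  have hFfin : ∀ᵐ x ∂μ, F x < ⊤ := ae_lt_top hFmeas (hFint ▸ hfin2.ne)
  -- rewrite the integrand
  have hrw : ∀ x, ((r x + γ * ∫ y, f y ∂(κ x)) - (r x + γ * ∫ y, h y ∂(κ x))) ^ 2
      = γ ^ 2 * ((∫ y, f y ∂(κ x)) - ∫ y, h y ∂(κ x)) ^ 2 := fun x => by ring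
  simp_rw [hrw]
  rw [integral_const_mul]
  refine mul_le_mul_of_nonneg_left ?_ (sq_nonneg γ)
  -- a.e. pointwise bound
  have haef := ae_memℒp_kernel κ μ hinv f hf hf2
  have haeh := ae_memℒp_kernel κ μ hinv h hh hh2
  have haeg := ae_memℒp_kernel κ μ hinv g hg hfh2
  have hptwise : ∀ᵐ x ∂μ, ((∫ y, f y ∂(κ x)) - ∫ y, h y ∂(κ x)) ^ 2 ≤ (F x).toReal := by
    filter_upwards [haef, haeh, haeg, hFfin] with x hfx hhx hgx hFx
    have hsub : (∫ y, f y ∂(κ x)) - ∫ y, h y ∂(κ x) = ∫ y, g y ∂(κ x) := by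
      rw [← integral_sub (hfx.integrable one_le_two) (hhx.integrable one_le_two)]
      rfl
    have hvar := variance_nonneg g (κ x)
    rw [variance_eq_sub hgx] at hvar
    have hsq : (∫ y, g y ∂(κ x)) ^ 2 ≤ ∫ y, g y ^ 2 ∂(κ x) := by
      have : (∫ y, (g ^ 2) y ∂(κ x)) = ∫ y, g y ^ 2 ∂(κ x) := by simp [Pi.pow_apply]
      linarith [hvar, this ▸ hvar]
    have hFx' : (F x).toReal = ∫ y, g y ^ 2 ∂(κ x) := by
      rw [integral_eq_lintegral_of_nonneg_ae (Filter.Eventually.of_forall fun y => sq_nonneg _)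
        (hg.pow_const 2).aestronglyMeasurable]
    rw [hsub, hFx']
    exact hsq
  have hFtoRealInt : Integrable (fun x => (F x).toReal) μ :=
    integrable_toReal_of_lintegral_ne_top hFmeas.aemeasurable (hFint ▸ hfin2.ne)
  calc ∫ x, ((∫ y, f y ∂(κ x)) - ∫ y, h y ∂(κ x)) ^ 2 ∂μ
      ≤ ∫ x, (F x).toReal ∂μ :=
        integral_mono_of_nonneg (Filter.Eventually.of_forall fun x => sq_nonneg _)
          hFtoRealInt hptwise
    _ = (∫⁻ x, F x ∂μ).toReal := integral_toReal hFmeas.aemeasurable hFfin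
    _ = (∫⁻ y, ENNReal.ofReal (g y ^ 2) ∂μ).toReal := by rw [hFint]
    _ = ∫ y, g y ^ 2 ∂μ := by
        rw [integral_eq_lintegral_of_nonneg_ae (Filter.Eventually.of_forall fun y => sq_nonneg _)
          (hg.pow_const 2).aestronglyMeasurable]
    _ = ∫ x, (f x - h x) ^ 2 ∂μ := by simp [hgdef]
end

section
/- Let c > 0, let τ ∈ ℕ, let A, B, D ≥ 0, let T ≥ 1 be a natural number, and let e : ℕ → ℝ be a sequence with e(t) ≥ 0 for all t. Set η(t) = 1/(2c(t+1)) for t ∈ ℕ. Suppose that for every t with 0 ≤ t ≤ T−1, e(t+1) ≤ (1 − 2c·η(t))·e(t) + A·η(t)² + B·η(t) + D·η(t)·η(max(t−τ, 0)). Then e(T) ≤ A(1 + log T)/(4c²T) + B/(2c) + D(τ + 1 + log T)/(4c²T). -/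
lemma harm_le (n : ℕ) (hn : 1 ≤ n) :
    ∑ t ∈ Finset.range n, (1:ℝ)/((t:ℝ)+1) ≤ 1 + Real.log n := by
  induction n, hn using Nat.le_induction with
  | base => simp
  | succ n hn ih =>
    rw [Finset.sum_range_succ]
    have hn0 : (0:ℝ) < n := by exact_mod_cast hn
    have h1 : Real.log ((n:ℝ)/((n:ℝ)+1)) ≤ (n:ℝ)/((n:ℝ)+1) - 1 :=
      Real.log_le_sub_one_of_pos (by positivity)
    rw [Real.log_div (by positivity) (by positivity)] at h1
    have heq : (n:ℝ)/((n:ℝ)+1) - 1 = -(1/((n:ℝ)+1)) := by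
      field_simp
      ring
    push_cast
    linarith

lemma gsum_le (τ T : ℕ) (hT : 1 ≤ T) :
    ∑ t ∈ Finset.range T, (1:ℝ)/(((t - τ : ℕ):ℝ)+1)
      ≤ (τ:ℝ) + ∑ t ∈ Finset.range T, (1:ℝ)/((t:ℝ)+1) := by
  by_cases h : T ≤ τ + 1
  · have hL : ∑ t ∈ Finset.range T, (1:ℝ)/(((t - τ : ℕ):ℝ)+1) = T := by
      have : ∀ t ∈ Finset.range T, (1:ℝ)/(((t - τ : ℕ):ℝ)+1) = 1 := by
        intro t ht
        rw [Finset.mem_range] at ht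
        have : t - τ = 0 := by omega
        rw [this]; norm_num
      rw [Finset.sum_congr rfl this]
      simp
    rw [hL]
    have h0 : (1:ℝ) ≤ ∑ t ∈ Finset.range T, (1:ℝ)/((t:ℝ)+1) := by
      have := Finset.single_le_sum (f := fun t : ℕ => (1:ℝ)/((t:ℝ)+1))
        (fun i _ => by positivity) (Finset.mem_range.mpr (by omega : 0 < T))
      simpa using this
    have : (T:ℝ) ≤ (τ:ℝ) + 1 := by exact_mod_cast h
    linarith
  · push_neg at h
    have hτT : τ + 1 ≤ T := by omega
    -- split LHS
    have hsplit : ∑ t ∈ Finset.range T, (1:ℝ)/(((t - τ : ℕ):ℝ)+1)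
        = (∑ t ∈ Finset.range (τ+1), (1:ℝ)/(((t - τ : ℕ):ℝ)+1))
          + ∑ t ∈ Finset.Ico (τ+1) T, (1:ℝ)/(((t - τ : ℕ):ℝ)+1) := by
      simp only [Finset.range_eq_Ico]
      exact (Finset.sum_Ico_consecutive _ (Nat.zero_le (τ+1)) hτT).symm
    have hfirst : ∑ t ∈ Finset.range (τ+1), (1:ℝ)/(((t - τ : ℕ):ℝ)+1) = (τ:ℝ)+1 := by
      have : ∀ t ∈ Finset.range (τ+1), (1:ℝ)/(((t - τ : ℕ):ℝ)+1) = 1 := by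
        intro t ht
        rw [Finset.mem_range] at ht
        have : t - τ = 0 := by omega
        rw [this]; norm_num
      rw [Finset.sum_congr rfl this]
      simp
    have hsecond : ∑ t ∈ Finset.Ico (τ+1) T, (1:ℝ)/(((t - τ : ℕ):ℝ)+1)
        = ∑ i ∈ Finset.range (T - (τ+1)), (1:ℝ)/((i:ℝ)+2) := by
      rw [Finset.sum_Ico_eq_sum_range]
      apply Finset.sum_congr rfl
      intro i _
      have : τ + 1 + i - τ = i + 1 := by omega
      rw [this]
      push_cast
      ring_nf
    have hRHS : ∑ t ∈ Finset.range T, (1:ℝ)/((t:ℝ)+1)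
        = 1 + ∑ i ∈ Finset.range (T-1), (1:ℝ)/((i:ℝ)+2) := by
      obtain ⟨m, rfl⟩ : ∃ m, T = m + 1 := ⟨T - 1, by omega⟩
      rw [Finset.sum_range_succ' (fun t => (1:ℝ)/((t:ℝ)+1)) m]
      have hterm : ∀ i ∈ Finset.range m, (1:ℝ)/(((i+1:ℕ):ℝ)+1) = 1/((i:ℝ)+2) := by
        intro i _
        push_cast
        ring_nf
      rw [Finset.sum_congr rfl hterm]
      simp only [Nat.add_sub_cancel, Nat.cast_zero]
      norm_num
      ring
    have hmono : ∑ i ∈ Finset.range (T - (τ+1)), (1:ℝ)/((i:ℝ)+2)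
        ≤ ∑ i ∈ Finset.range (T-1), (1:ℝ)/((i:ℝ)+2) := by
      apply Finset.sum_le_sum_of_subset_of_nonneg
      · exact Finset.range_subset_range.mpr (by omega)
      · intro i _ _; positivity
    rw [hsplit, hfirst, hsecond, hRHS]
    linarith

/-- Deterministic recursion lemma encapsulating the convergence-rate computation in the
proof of Theorem 1 of the paper, with step sizes `η t = 1/(2c(t+1))`. -/
theorem stmt11
    (c : ℝ) (hc : 0 < c) (τ : ℕ) (A B D : ℝ)
    (hA : 0 ≤ A) (hB : 0 ≤ B) (hD : 0 ≤ D)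
    (T : ℕ) (hT : 1 ≤ T)
    (e : ℕ → ℝ) (he : ∀ t, 0 ≤ e t)
    (η : ℕ → ℝ) (hη : ∀ t : ℕ, η t = 1 / (2 * c * ((t : ℝ) + 1)))
    (hrec : ∀ t : ℕ, t < T →
      e (t + 1) ≤ (1 - 2 * c * η t) * e t + A * η t ^ 2 + B * η t + D * η t * η (t - τ)) :
    e T ≤ A * (1 + Real.log T) / (4 * c ^ 2 * T) + B / (2 * c)
      + D * ((τ : ℝ) + 1 + Real.log T) / (4 * c ^ 2 * T) := by
  have hc' : c ≠ 0 := ne_of_gt hc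
  have key : ∀ n, n ≤ T → (n:ℝ) * e n ≤
      A/(4*c^2) * (∑ t ∈ Finset.range n, (1:ℝ)/((t:ℝ)+1))
      + B/(2*c) * n
      + D/(4*c^2) * (∑ t ∈ Finset.range n, (1:ℝ)/(((t - τ : ℕ):ℝ)+1)) := by
    intro n
    induction n with
    | zero => intro _; simp
    | succ n ih =>
      intro hn
      have hnT : n < T := hn
      have h1 := hrec n hnT
      rw [hη n, hη (n - τ)] at h1
      have hx : (0:ℝ) < (n:ℝ)+1 := by positivity
      have hy : (0:ℝ) < ((n - τ : ℕ):ℝ)+1 := by positivity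
      have h2 := mul_le_mul_of_nonneg_left h1 hx.le
      have hE : ((n:ℝ)+1) * ((1 - 2*c*(1/(2*c*((n:ℝ)+1)))) * e n
          + A * (1/(2*c*((n:ℝ)+1)))^2 + B * (1/(2*c*((n:ℝ)+1)))
          + D * (1/(2*c*((n:ℝ)+1))) * (1/(2*c*(((n - τ : ℕ):ℝ)+1))))
          = (n:ℝ) * e n + A/(4*c^2) * (1/((n:ℝ)+1)) + B/(2*c)
            + D/(4*c^2) * (1/(((n - τ : ℕ):ℝ)+1)) := by
        field_simp
        ring
      rw [hE] at h2
      have ih' := ih (le_of_lt hnT)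
      rw [Finset.sum_range_succ, Finset.sum_range_succ]
      push_cast
      push_cast at h2
      linarith
  have hT0 : (0:ℝ) < T := by exact_mod_cast hT
  have hH : ∑ t ∈ Finset.range T, (1:ℝ)/((t:ℝ)+1) ≤ 1 + Real.log T := harm_le T hT
  have hG : ∑ t ∈ Finset.range T, (1:ℝ)/(((t - τ : ℕ):ℝ)+1) ≤ (τ:ℝ) + 1 + Real.log T := by
    have := gsum_le τ T hT
    linarith
  have hk := key T le_rfl
  have hfin : (T:ℝ) * e T
      ≤ (A * (1 + Real.log T) / (4 * c ^ 2 * T) + B / (2 * c)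
        + D * ((τ:ℝ) + 1 + Real.log T) / (4 * c ^ 2 * T)) * T := by
    have step : A/(4*c^2) * (∑ t ∈ Finset.range T, (1:ℝ)/((t:ℝ)+1))
        + B/(2*c) * T
        + D/(4*c^2) * (∑ t ∈ Finset.range T, (1:ℝ)/(((t - τ : ℕ):ℝ)+1))
        ≤ A/(4*c^2) * (1 + Real.log T) + B/(2*c) * T
          + D/(4*c^2) * ((τ:ℝ) + 1 + Real.log T) := by
      gcongr <;> positivity
    have heq : A/(4*c^2) * (1 + Real.log T) + B/(2*c) * T
          + D/(4*c^2) * ((τ:ℝ) + 1 + Real.log T)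
        = (A * (1 + Real.log T) / (4 * c ^ 2 * T) + B / (2 * c)
          + D * ((τ:ℝ) + 1 + Real.log T) / (4 * c ^ 2 * T)) * T := by
      field_simp
    linarith
  have := (mul_le_mul_iff_right₀ hT0).mp (by linarith [hfin] : (T:ℝ) * e T ≤ (T:ℝ) * (A * (1 + Real.log T) / (4 * c ^ 2 * T) + B / (2 * c) + D * ((τ:ℝ) + 1 + Real.log T) / (4 * c ^ 2 * T)))
  exact this
end
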